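/- Let D ⊊ ℝⁿ be a length a-John domain with center x₀. Then for every x ∈ D there is an arc β joining x to x₀ such that ℓ(β) ≤ c|x − x₀| and β is a c-carrot arc (ℓ(β[x,z]) ≤ c·dist(z, ∂D) for all z ∈ β), where c depends only on a (not on n). -/

import Mathlib

open Set Metric ENNReal

noncomputable section

variable {X : Type*} [MetricSpace X] {Y : Type*} [MetricSpace Y]

/-- Distance from a point `z` to the boundary of `D`, modeled as the distance
to the complement of `D`. -/
def bdist (D : Set X) (z : X) : ℝ := Metric.infDist z Dᶜ

/-- Distance from a set `A` to the boundary of `D`. -/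
def setBdist (D A : Set X) : ℝ := sInf (bdist D '' A)

/-- Quasihyperbolic length (variation) of `f` over the parameter set `s`, the
discretized version of `∫_γ |dz| / dist(z, ∂D)`. -/
def qhVariationOn (D : Set X) (f : ℝ → X) (s : Set ℝ) : ℝ≥0∞ :=
  ⨆ p : ℕ × { u : ℕ → ℝ // Monotone u ∧ ∀ i, u i ∈ s },
    ∑ i ∈ Finset.range p.1,
      edist (f (p.2.1 (i + 1))) (f (p.2.1 i)) /
        max (ENNReal.ofReal (bdist D (f (p.2.1 i))))
            (ENNReal.ofReal (bdist D (f (p.2.1 (i + 1)))))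

/-- `f : [0,1] → D` is a curve in `D` from `x` to `y`. -/
structure IsCurveIn (D : Set X) (f : ℝ → X) (x y : X) : Prop where
  cont : ContinuousOn f (Icc 0 1)
  mem : ∀ t ∈ Icc (0 : ℝ) 1, f t ∈ D
  source : f 0 = x
  target : f 1 = y

/-- Every pair of points of `D` can be joined by a rectifiable curve in `D`. -/
def RectifiablyConnected (D : Set X) : Prop :=
  ∀ x ∈ D, ∀ y ∈ D, ∃ f : ℝ → X, IsCurveIn D f x y ∧ eVariationOn f (Icc 0 1) < ⊤

/-- The quasihyperbolic distance in `D`. -/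
def qhDist (D : Set X) (x y : X) : ℝ≥0∞ :=
  ⨅ (f : ℝ → X) (_ : IsCurveIn D f x y ∧ eVariationOn f (Icc 0 1) < ⊤),
    qhVariationOn D f (Icc 0 1)

/-- Diameter of a set `A ⊆ D` with respect to the quasihyperbolic metric of `D`. -/
def qhDiam (D : Set X) (A : Set X) : ℝ≥0∞ := ⨆ x ∈ A, ⨆ y ∈ A, qhDist D x y

/-- `D` is a length `a`-John space with center `x₀`: every point can be joined to `x₀`
by an `a`-carrot arc, i.e. `ℓ(α[x,z]) ≤ a · dist(z, ∂D)` for every `z` on the arc. -/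
def IsLengthJohn (D : Set X) (a : ℝ) (x₀ : X) : Prop :=
  ∀ x ∈ D, ∃ f : ℝ → X, IsCurveIn D f x x₀ ∧
    ∀ t ∈ Icc (0 : ℝ) 1, eVariationOn f (Icc 0 t) ≤ ENNReal.ofReal (a * bdist D (f t))

/-- `D` is locally `(lam, c)`-quasiconvex: any two points of `B(x, lam·dist(x,∂D))`
can be joined by a `c`-quasiconvex curve in `D`. -/
def LocQuasiconvex (D : Set X) (lam c : ℝ) : Prop :=
  ∀ x ∈ D, ∀ y ∈ D, ∀ z ∈ D,
    dist y x < lam * bdist D x → dist z x < lam * bdist D x →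
      ∃ f : ℝ → X, IsCurveIn D f y z ∧
        eVariationOn f (Icc 0 1) ≤ ENNReal.ofReal (c * dist y z)

/-- `η` is a quasisymmetry control function: an increasing self-homeomorphism of `[0, ∞)`. -/
structure QSControl (η : ℝ → ℝ) : Prop where
  mono : StrictMonoOn η (Ici 0)
  cont : ContinuousOn η (Ici 0)
  zero : η 0 = 0
  surj : ∀ s : ℝ, 0 ≤ s → ∃ t : ℝ, 0 ≤ t ∧ η t = s

/-- `f` is `η`-quasisymmetric on `D`. -/
def IsQSOn (f : X → Y) (D : Set X) (η : ℝ → ℝ) : Prop :=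
  ∀ x ∈ D, ∀ a ∈ D, ∀ b ∈ D, ∀ t : ℝ, 0 ≤ t →
    dist x a ≤ t * dist x b → dist (f x) (f a) ≤ η t * dist (f x) (f b)

/-- `f` is a homeomorphism from `D` onto `D'` with inverse `g`. -/
def IsHomeoOn (f : X → Y) (g : Y → X) (D : Set X) (D' : Set Y) : Prop :=
  ContinuousOn f D ∧ ContinuousOn g D' ∧ MapsTo f D D' ∧ MapsTo g D' D ∧ InvOn g f D D'

end

theorem segment_evar' {E : Type*} [NormedAddCommGroup E] [NormedSpace ℝ E] (x v : E) (u : ℝ) (hu : 0 ≤ u) :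
    eVariationOn (fun t : ℝ => x + t • v) (Icc 0 u) ≤ ENNReal.ofReal (‖v‖ * u) := by
  have hL : LipschitzWith ‖v‖₊ (fun t : ℝ => x + t • v) := by
    apply LipschitzWith.of_dist_le_mul
    intro s t
    simp only [dist_add_left, dist_eq_norm, Real.norm_eq_abs, coe_nnnorm]
    rw [add_sub_add_left_eq_sub, ← sub_smul, norm_smul, Real.norm_eq_abs, mul_comm]
  have h1 : eVariationOn (fun t : ℝ => x + t • v) (Icc 0 u)
      ≤ (‖v‖₊ : ℝ≥0∞) * eVariationOn id (Icc 0 u) :=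
    (hL.lipschitzOnWith (s := univ)).comp_eVariationOn_le (mapsTo_univ _ _)
  have h2 : eVariationOn (id : ℝ → ℝ) (Icc 0 u) ≤ ENNReal.ofReal (u - 0) := by
    have := (monotone_id.monotoneOn (Icc (0:ℝ) u)).eVariationOn_le
      (Set.left_mem_Icc.2 hu) (Set.right_mem_Icc.2 hu)
    simpa using this
  calc eVariationOn (fun t : ℝ => x + t • v) (Icc 0 u)
      ≤ (‖v‖₊ : ℝ≥0∞) * ENNReal.ofReal (u - 0) :=
        le_trans h1 (mul_le_mul_right h2 _)
    _ = ENNReal.ofReal (‖v‖ * u) := by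
        rw [sub_zero, ← ENNReal.ofReal_coe_nnreal, coe_nnnorm, ← ENNReal.ofReal_mul (norm_nonneg v)]

/-- Corollary: In a length `a`-John domain `D ⊊ ℝⁿ` with center `x₀`,
every `x ∈ D` joins `x₀` by an arc `β` with `ℓ(β) ≤ C|x − x₀|` which is a `C`-carrot
arc, `C` depending only on `a` (not on `n`). -/
theorem euclidean_john_quasiconvex_carrot (a : ℝ) (ha : 1 ≤ a) :
    ∃ C : ℝ, 1 ≤ C ∧
      ∀ (n : ℕ) (D : Set (EuclideanSpace ℝ (Fin n))), IsOpen D → IsConnected D →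
        D ≠ Set.univ → ∀ x₀ ∈ D, IsLengthJohn D a x₀ →
        ∀ x ∈ D, ∃ f : ℝ → EuclideanSpace ℝ (Fin n), IsCurveIn D f x x₀ ∧
          eVariationOn f (Icc 0 1) ≤ ENNReal.ofReal (C * dist x x₀) ∧
          ∀ t ∈ Icc (0 : ℝ) 1,
            eVariationOn f (Icc 0 t) ≤ ENNReal.ofReal (C * bdist D (f t)) := by
  refine ⟨2 * a, by linarith, fun n D _hD _hconn _hne x₀ hx₀ hJohn x hx => ?_⟩
  have hb0 : (0:ℝ) ≤ bdist D x₀ := Metric.infDist_nonneg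
  by_cases hcase : bdist D x₀ ≤ 2 * dist x x₀
  · -- use the John arc
    obtain ⟨f, hf, hcarrot⟩ := hJohn x hx
    refine ⟨f, hf, ?_, fun t ht => ?_⟩
    · have h1 := hcarrot 1 (by constructor <;> norm_num)
      rw [hf.target] at h1
      refine h1.trans (ENNReal.ofReal_le_ofReal ?_)
      nlinarith
    · refine (hcarrot t ht).trans (ENNReal.ofReal_le_ofReal ?_)
      have : (0:ℝ) ≤ bdist D (f t) := Metric.infDist_nonneg
      nlinarith
  · -- x is very close to x₀: use the segment
    push_neg at hcase
    set v := x₀ - x with hv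
    have hnv : ‖v‖ = dist x x₀ := by rw [hv, dist_eq_norm, ← norm_neg]; congr 1; abel
    refine ⟨fun t : ℝ => x + t • v, ?_, ?_, ?_⟩
    · -- IsCurveIn
      have hmem : ∀ t ∈ Icc (0:ℝ) 1, x + t • v ∈ D := by
        intro t ht
        by_contra hmem
        have hle : bdist D x₀ ≤ dist x₀ (x + t • v) :=
          Metric.infDist_le_dist_of_mem hmem
        have hdist : dist x₀ (x + t • v) = (1 - t) * ‖v‖ := by
          rw [dist_eq_norm]
          have : x₀ - (x + t • v) = (1 - t) • v := by
            rw [hv]; module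
          rw [this, norm_smul, Real.norm_eq_abs, abs_of_nonneg (by linarith [ht.2])]
        have h1 : dist x₀ (x + t • v) ≤ dist x x₀ := by
          rw [hdist, hnv]
          nlinarith [ht.1, ht.2, dist_nonneg (x := x) (y := x₀)]
        nlinarith [dist_nonneg (x := x) (y := x₀)]
      exact ⟨(continuous_const.add (continuous_id.smul continuous_const)).continuousOn,
        hmem, by simp, by simp [hv]⟩
    · refine (segment_evar' x v 1 zero_le_one).trans (ENNReal.ofReal_le_ofReal ?_)
      rw [hnv]
      nlinarith [dist_nonneg (x := x) (y := x₀)]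
    · intro t ht
      -- bdist at the point f t
      have hbt : dist x x₀ ≤ bdist D (x + t • v) := by
        have h3 : bdist D x₀ ≤ bdist D (x + t • v) + dist x₀ (x + t • v) :=
          Metric.infDist_le_infDist_add_dist
        have hdist : dist x₀ (x + t • v) = (1 - t) * ‖v‖ := by
          rw [dist_eq_norm]
          have : x₀ - (x + t • v) = (1 - t) • v := by rw [hv]; module
          rw [this, norm_smul, Real.norm_eq_abs, abs_of_nonneg (by linarith [ht.2])]
        rw [hdist, hnv] at h3
        nlinarith [ht.1, ht.2, dist_nonneg (x := x) (y := x₀)]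
      refine (segment_evar' x v t ht.1).trans (ENNReal.ofReal_le_ofReal ?_)
      rw [hnv]
      have hb : (0:ℝ) ≤ bdist D (x + t • v) := Metric.infDist_nonneg
      nlinarith [ht.1, ht.2, dist_nonneg (x := x) (y := x₀)]
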